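/- Let n ≥ 4 and let Σ = {±e_k ± e_l : 1 ≤ k < l ≤ n} ⊂ ℝ^n be the root system of type D_n with simple roots α_k = e_k − e_{k+1} (1 ≤ k ≤ n−1) and α_n = e_{n−1} + e_n. Let 1 ≤ i < j ≤ n−2, let S = {α_k : 1 ≤ k ≤ n, k ≠ i, k ≠ j}, and let p be the orthogonal projection of ℝ^n onto the orthogonal complement of the span of S. Write ᾱ_i = p(α_i) and ᾱ_j = p(α_j). Then ᾱ_i and ᾱ_j are linearly independent and the set of reduced restricted roots Σ_red(S) equals {±ᾱ_i, ±ᾱ_j, ±(ᾱ_i + ᾱ_j), ±(ᾱ_i + 2ᾱ_j)}. -/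

import Mathlib

noncomputable section

/-- The `k`-th standard basis vector of `ℝ^N`. -/
def e {N : ℕ} (k : Fin N) : EuclideanSpace ℝ (Fin N) := EuclideanSpace.single k 1

/-- Orthogonal projection of `ℝ^N` onto the orthogonal complement of the span of `S`. -/
def projC {N : ℕ} (S : Set (EuclideanSpace ℝ (Fin N))) (v : EuclideanSpace ℝ (Fin N)) :
    EuclideanSpace ℝ (Fin N) :=
  (Submodule.orthogonalProjection ((Submodule.span ℝ S)ᗮ) v : EuclideanSpace ℝ (Fin N))

/-- The set of restricted roots `Σ(S) = p(Σ) \ {0}`. -/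
def restrictedRoots {N : ℕ} (Rts S : Set (EuclideanSpace ℝ (Fin N))) :
    Set (EuclideanSpace ℝ (Fin N)) :=
  (projC S '' Rts) \ {0}

/-- The set of reduced restricted roots: those `x ∈ Σ(S)` with `x/2 ∉ Σ(S)`. -/
def reducedRestrictedRoots {N : ℕ} (Rts S : Set (EuclideanSpace ℝ (Fin N))) :
    Set (EuclideanSpace ℝ (Fin N)) :=
  {x ∈ restrictedRoots Rts S | ¬ (1 / 2 : ℝ) • x ∈ restrictedRoots Rts S}

/-- The root system of type `D_n` in `ℝ^n`: `±e_k ± e_l` (`k < l`). -/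
def Droots (n : ℕ) : Set (EuclideanSpace ℝ (Fin n)) :=
  {v | ∃ k l : Fin n, k < l ∧
    (v = e k - e l ∨ v = e k + e l ∨ v = -e k + e l ∨ v = -e k - e l)}

/-- The simple roots of `D_n`: `α_k = e_k − e_{k+1}` (`1 ≤ k ≤ n−1`) and
`α_n = e_{n−1} + e_n` (indexed here by `Fin n`). -/
def Dsimple (n : ℕ) (hn : 2 ≤ n) (k : Fin n) : EuclideanSpace ℝ (Fin n) :=
  if h : (k : ℕ) + 1 < n then e k - e ⟨(k : ℕ) + 1, h⟩
  else e ⟨n - 2, by omega⟩ + e ⟨n - 1, by omega⟩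

open scoped RealInnerProductSpace

def uvec (n I : ℕ) : EuclideanSpace ℝ (Fin n) := WithLp.toLp 2 (fun k : Fin n => if (k:ℕ) ≤ I then 1 else 0)
def wvec (n I J : ℕ) : EuclideanSpace ℝ (Fin n) :=
  WithLp.toLp 2 (fun k : Fin n => if I < (k:ℕ) ∧ (k:ℕ) ≤ J then 1 else 0)

lemma uvec_sum (n I : ℕ) :
    uvec n I = ∑ l ∈ Finset.univ.filter (fun l : Fin n => (l:ℕ) ≤ I), e l := by
  ext m
  rw [WithLp.ofLp_sum, Finset.sum_apply]
  simp only [e, EuclideanSpace.single_apply, Finset.sum_ite_eq, Finset.mem_filter,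
    Finset.mem_univ, true_and]
  rfl

lemma wvec_sum (n I J : ℕ) :
    wvec n I J = ∑ l ∈ Finset.univ.filter (fun l : Fin n => I < (l:ℕ) ∧ (l:ℕ) ≤ J), e l := by
  ext m
  rw [WithLp.ofLp_sum, Finset.sum_apply]
  simp only [e, EuclideanSpace.single_apply, Finset.sum_ite_eq, Finset.mem_filter,
    Finset.mem_univ, true_and]
  rfl

lemma uvec_card {n I : ℕ} (hI : I < n) :
    (Finset.univ.filter (fun l : Fin n => (l:ℕ) ≤ I)).card = I + 1 := by
  have : Finset.univ.filter (fun l : Fin n => (l:ℕ) ≤ I) = Finset.Iic ⟨I, hI⟩ := by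
    ext l; simp [Fin.le_def]
  rw [this, Fin.card_Iic]

lemma wvec_card {n I J : ℕ} (hI : I < n) (hJ : J < n) :
    (Finset.univ.filter (fun l : Fin n => I < (l:ℕ) ∧ (l:ℕ) ≤ J)).card = J - I := by
  have : Finset.univ.filter (fun l : Fin n => I < (l:ℕ) ∧ (l:ℕ) ≤ J)
      = Finset.Ioc ⟨I, hI⟩ ⟨J, hJ⟩ := by
    ext l; simp [Fin.lt_def, Fin.le_def]
  rw [this, Fin.card_Ioc]

def Avec (n I : ℕ) : EuclideanSpace ℝ (Fin n) := ((I:ℝ)+1)⁻¹ • uvec n I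
def Bvec (n I J : ℕ) : EuclideanSpace ℝ (Fin n) := ((J:ℝ)-(I:ℝ))⁻¹ • wvec n I J

def OKpair (c d : ℝ) : Prop :=
  (c = 0 ∧ d = 0) ∨ (c = 1 ∧ d = 0) ∨ (c = -1 ∧ d = 0) ∨ (c = 2 ∧ d = 0) ∨ (c = -2 ∧ d = 0) ∨
  (c = 0 ∧ d = 1) ∨ (c = 0 ∧ d = -1) ∨ (c = 0 ∧ d = 2) ∨ (c = 0 ∧ d = -2) ∨
  (c = 1 ∧ d = 1) ∨ (c = 1 ∧ d = -1) ∨ (c = -1 ∧ d = 1) ∨ (c = -1 ∧ d = -1)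

lemma OKsum {n : ℕ} {A B : EuclideanSpace ℝ (Fin n)} (s t : ℝ)
    (hs : s = 1 ∨ s = -1) (ht : t = 1 ∨ t = -1) (P Q : EuclideanSpace ℝ (Fin n))
    (hP : P = A ∨ P = B ∨ P = 0) (hQ : Q = A ∨ Q = B ∨ Q = 0) :
    ∃ c d : ℝ, OKpair c d ∧ s • P + t • Q = c • A + d • B := by
  rcases hP with rfl | rfl | rfl <;> rcases hQ with rfl | rfl | rfl
  · exact ⟨s+t, 0, by rcases hs with rfl|rfl <;> rcases ht with rfl|rfl <;> norm_num [OKpair],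
      by module⟩
  · exact ⟨s, t, by rcases hs with rfl|rfl <;> rcases ht with rfl|rfl <;> norm_num [OKpair],
      by module⟩
  · exact ⟨s, 0, by rcases hs with rfl|rfl <;> norm_num [OKpair], by module⟩
  · exact ⟨t, s, by rcases hs with rfl|rfl <;> rcases ht with rfl|rfl <;> norm_num [OKpair],
      by module⟩
  · exact ⟨0, s+t, by rcases hs with rfl|rfl <;> rcases ht with rfl|rfl <;> norm_num [OKpair],
      by module⟩
  · exact ⟨0, s, by rcases hs with rfl|rfl <;> norm_num [OKpair], by module⟩
  · exact ⟨t, 0, by rcases ht with rfl|rfl <;> norm_num [OKpair], by module⟩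
  · exact ⟨0, t, by rcases ht with rfl|rfl <;> norm_num [OKpair], by module⟩
  · exact ⟨0, 0, by norm_num [OKpair], by module⟩

section Aux
variable {n : ℕ} {i j : Fin n} {S : Set (EuclideanSpace ℝ (Fin n))}

lemma projC_eq {v z : EuclideanSpace ℝ (Fin n)} (hz : z ∈ (Submodule.span ℝ S)ᗮ)
    (hvz : v - z ∈ Submodule.span ℝ S) : projC S v = z :=
  Submodule.eq_starProjection_of_mem_orthogonal hz
    ((Submodule.span ℝ S).le_orthogonal_orthogonal hvz)

lemma projC_add (x y : EuclideanSpace ℝ (Fin n)) : projC S (x + y) = projC S x + projC S y := by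
  simp [projC, map_add]

lemma projC_neg (x : EuclideanSpace ℝ (Fin n)) : projC S (-x) = - projC S x := by
  simp [projC, map_neg]

lemma projC_sub (x y : EuclideanSpace ℝ (Fin n)) : projC S (x - y) = projC S x - projC S y := by
  simp [projC, map_sub]

variable (hn : 4 ≤ n) (hij : i < j) (hj : (j : ℕ) + 2 < n)
  (hS : S = {v | ∃ k : Fin n, k ≠ i ∧ k ≠ j ∧ v = Dsimple n (by omega) k})

section
include hn hS

lemma mem_S (k : Fin n) (h1 : (k:ℕ)+1 < n) (hki : k ≠ i) (hkj : k ≠ j) :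
    e k - e ⟨(k:ℕ)+1, h1⟩ ∈ Submodule.span ℝ S :=
  Submodule.subset_span (by rw [hS]; exact ⟨k, hki, hkj, by rw [Dsimple, dif_pos h1]⟩)

include hij hj

lemma mem_S_last :
    e ⟨n-2, by omega⟩ + e ⟨n-1, by omega⟩ ∈ Submodule.span ℝ S := by
  have hij' : (i:ℕ) < (j:ℕ) := hij
  refine Submodule.subset_span ?_
  rw [hS]
  refine ⟨⟨n-1, by omega⟩, ?_, ?_, ?_⟩
  · exact Fin.ne_of_val_ne (by simp only [Fin.val_mk]; omega)
  · exact Fin.ne_of_val_ne (by simp only [Fin.val_mk]; omega)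
  · rw [Dsimple, dif_neg (by simp only [Fin.val_mk]; omega)]

lemma mem_tail (k : Fin n) (hk : (j:ℕ) < (k:ℕ)) : e k ∈ Submodule.span ℝ S := by
  have hij' : (i:ℕ) < (j:ℕ) := hij
  have hlast : e (⟨n-1, by omega⟩ : Fin n) ∈ Submodule.span ℝ S := by
    have hd : e (⟨n-2, by omega⟩ : Fin n) - e ⟨n-1, by omega⟩ ∈ Submodule.span ℝ S := by
      have h9 : (⟨((⟨n-2, by omega⟩ : Fin n) : ℕ)+1, by simp only [Fin.val_mk]; omega⟩ : Fin n)
          = (⟨n-1, by omega⟩ : Fin n) := Fin.ext (by simp only [Fin.val_mk]; omega)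
      have hh := mem_S hn hS (⟨n-2, by omega⟩ : Fin n) (by simp only [Fin.val_mk]; omega)
        (Fin.ne_of_val_ne (by simp only [Fin.val_mk]; omega))
        (Fin.ne_of_val_ne (by simp only [Fin.val_mk]; omega))
      rw [h9] at hh
      exact hh
    have hs := mem_S_last hn hij hj hS
    have h2 : e (⟨n-1, by omega⟩ : Fin n)
        = (2:ℝ)⁻¹ • ((e ⟨n-2, by omega⟩ + e ⟨n-1, by omega⟩) - (e ⟨n-2, by omega⟩ - e ⟨n-1, by omega⟩)) := by
      module
    rw [h2]
    exact Submodule.smul_mem _ _ (Submodule.sub_mem _ hs hd)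
  suffices H : ∀ m : ℕ, ∀ k : Fin n, n - 1 - (k:ℕ) ≤ m → (j:ℕ) < (k:ℕ) → e k ∈ Submodule.span ℝ S by
    exact H (n-1) k (by omega) hk
  intro m
  induction m with
  | zero =>
    intro k hk1 _
    have : k = ⟨n-1, by omega⟩ := Fin.ext (by simp only [Fin.val_mk]; omega)
    rw [this]; exact hlast
  | succ m ih =>
    intro k hk1 hk2
    by_cases htop : (k:ℕ) = n-1
    · have : k = ⟨n-1, by omega⟩ := Fin.ext (by simp only [Fin.val_mk]; omega)
      rw [this]; exact hlast
    · have h1 : (k:ℕ)+1 < n := by omega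
      have hmem := mem_S hn hS k h1 (Fin.ne_of_val_ne (by omega)) (Fin.ne_of_val_ne (by omega))
      have hnext := ih ⟨(k:ℕ)+1, h1⟩ (by simp only [Fin.val_mk]; omega)
        (by simp only [Fin.val_mk]; omega)
      have heq : e k = (e k - e ⟨(k:ℕ)+1, h1⟩) + e ⟨(k:ℕ)+1, h1⟩ := by module
      rw [heq]
      exact Submodule.add_mem _ hmem hnext

lemma mem_block (d : ℕ) : ∀ k l : Fin n, (l:ℕ) = (k:ℕ) + d →
    ((l:ℕ) ≤ (i:ℕ) ∨ ((i:ℕ) < (k:ℕ) ∧ (l:ℕ) ≤ (j:ℕ))) →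
    e k - e l ∈ Submodule.span ℝ S := by
  have hij' : (i:ℕ) < (j:ℕ) := hij
  induction d with
  | zero =>
    intro k l hkl _
    have : k = l := Fin.ext (by omega)
    rw [this, sub_self]; exact Submodule.zero_mem _
  | succ d ih =>
    intro k l hkl hcond
    have hjn : (j:ℕ) < n := j.isLt
    have h1 : (k:ℕ)+1 < n := by omega
    have hki : k ≠ i := by
      refine Fin.ne_of_val_ne ?_
      rcases hcond with h | h <;> omega
    have hkj : k ≠ j := by
      refine Fin.ne_of_val_ne ?_
      rcases hcond with h | h <;> omega
    have hmem := mem_S hn hS k h1 hki hkj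
    have hnext : e ⟨(k:ℕ)+1, h1⟩ - e l ∈ Submodule.span ℝ S := by
      refine ih ⟨(k:ℕ)+1, h1⟩ l (by simp only [Fin.val_mk]; omega) ?_
      rcases hcond with h | h
      · left; omega
      · right
        exact ⟨by simp only [Fin.val_mk]; omega, h.2⟩
    have heq : e k - e l = (e k - e ⟨(k:ℕ)+1, h1⟩) + (e ⟨(k:ℕ)+1, h1⟩ - e l) := by module
    rw [heq]
    exact Submodule.add_mem _ hmem hnext

lemma mem_block' (k l : Fin n)
    (hcond : ((k:ℕ) ≤ (i:ℕ) ∧ (l:ℕ) ≤ (i:ℕ)) ∨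
      ((i:ℕ) < (k:ℕ) ∧ (k:ℕ) ≤ (j:ℕ) ∧ (i:ℕ) < (l:ℕ) ∧ (l:ℕ) ≤ (j:ℕ))) :
    e k - e l ∈ Submodule.span ℝ S := by
  rcases le_total (k:ℕ) (l:ℕ) with hle | hle
  · refine mem_block hn hij hj hS ((l:ℕ) - (k:ℕ)) k l (by omega) ?_
    rcases hcond with h | h
    · left; omega
    · right; omega
  · have hmem : e l - e k ∈ Submodule.span ℝ S := by
      refine mem_block hn hij hj hS ((k:ℕ) - (l:ℕ)) l k (by omega) ?_
      rcases hcond with h | h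
      · left; omega
      · right; omega
    have h2 : e k - e l = -(e l - e k) := by module
    rw [h2]; exact Submodule.neg_mem _ hmem
end

include hn hij hj hS in
lemma orth_of (v : EuclideanSpace ℝ (Fin n))
    (h1 : ∀ (k : Fin n) (h : (k:ℕ)+1 < n), k ≠ i → k ≠ j → v k = v ⟨(k:ℕ)+1, h⟩)
    (h2 : v ⟨n-2, by omega⟩ + v ⟨n-1, by omega⟩ = 0) :
    v ∈ (Submodule.span ℝ S)ᗮ := by
  rw [Submodule.mem_orthogonal]
  intro u hu
  induction hu using Submodule.span_induction with
  | mem x hx =>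
    rw [hS] at hx
    obtain ⟨k, hki, hkj, rfl⟩ := hx
    rw [Dsimple]
    by_cases hk : (k:ℕ)+1 < n
    · rw [dif_pos hk]
      simp only [e, inner_sub_left, EuclideanSpace.inner_single_left, map_one, one_mul]
      rw [h1 k hk hki hkj, sub_self]
    · rw [dif_neg hk]
      simp only [e, inner_add_left, EuclideanSpace.inner_single_left, map_one, one_mul]
      exact h2
  | zero => simp
  | add x y _ _ hx hy => rw [inner_add_left, hx, hy, add_zero]
  | smul c x _ hx => rw [inner_smul_left, hx, mul_zero]

include hn hij hj hS in
lemma uvec_orth : uvec n (i:ℕ) ∈ (Submodule.span ℝ S)ᗮ := by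
  have hij' : (i:ℕ) < (j:ℕ) := hij
  refine orth_of hn hij hj hS _ ?_ ?_
  · intro k h hki hkj
    have hki' : (k:ℕ) ≠ (i:ℕ) := Fin.val_ne_of_ne hki
    simp only [uvec, PiLp.toLp_apply, Fin.val_mk]
    split_ifs <;> first | rfl | (exfalso; omega)
  · simp only [uvec, PiLp.toLp_apply, Fin.val_mk]
    rw [if_neg (by omega), if_neg (by omega), add_zero]

include hn hij hj hS in
lemma wvec_orth : wvec n (i:ℕ) (j:ℕ) ∈ (Submodule.span ℝ S)ᗮ := by
  have hij' : (i:ℕ) < (j:ℕ) := hij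
  refine orth_of hn hij hj hS _ ?_ ?_
  · intro k h hki hkj
    have hki' : (k:ℕ) ≠ (i:ℕ) := Fin.val_ne_of_ne hki
    have hkj' : (k:ℕ) ≠ (j:ℕ) := Fin.val_ne_of_ne hkj
    simp only [wvec, PiLp.toLp_apply, Fin.val_mk]
    split_ifs <;> first | rfl | (exfalso; omega)
  · simp only [wvec, PiLp.toLp_apply, Fin.val_mk]
    rw [if_neg (by omega), if_neg (by omega), add_zero]

include hn hij hj hS in
lemma proj_e (k : Fin n) :
    projC S (e k) =
      if (k:ℕ) ≤ (i:ℕ) then (((i:ℕ):ℝ)+1)⁻¹ • uvec n (i:ℕ)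
      else if (k:ℕ) ≤ (j:ℕ) then (((j:ℕ):ℝ)-((i:ℕ):ℝ))⁻¹ • wvec n (i:ℕ) (j:ℕ)
      else 0 := by
  have hij' : (i:ℕ) < (j:ℕ) := hij
  by_cases hk1 : (k:ℕ) ≤ (i:ℕ)
  · rw [if_pos hk1]
    refine projC_eq (Submodule.smul_mem _ _ (uvec_orth hn hij hj hS)) ?_
    have hmem : (((i:ℕ):ℝ)+1) • (e k) - uvec n (i:ℕ) ∈ Submodule.span ℝ S := by
      have hdist : (((i:ℕ):ℝ)+1) • (e k) - uvec n (i:ℕ)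
          = ∑ l ∈ Finset.univ.filter (fun l : Fin n => (l:ℕ) ≤ (i:ℕ)), (e k - e l) := by
        rw [Finset.sum_sub_distrib, Finset.sum_const, uvec_card i.isLt, uvec_sum n (i:ℕ)]
        congr 1
        rw [← Nat.cast_smul_eq_nsmul ℝ]
        push_cast
        rfl
      rw [hdist]
      refine Submodule.sum_mem _ (fun l hl => ?_)
      exact mem_block' hn hij hj hS k l (Or.inl ⟨hk1, (Finset.mem_filter.1 hl).2⟩)
    have heq : e k - (((i:ℕ):ℝ)+1)⁻¹ • uvec n (i:ℕ)
        = (((i:ℕ):ℝ)+1)⁻¹ • ((((i:ℕ):ℝ)+1) • (e k) - uvec n (i:ℕ)) := by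
      rw [smul_sub, smul_smul, inv_mul_cancel₀ (by positivity), one_smul]
    rw [heq]
    exact Submodule.smul_mem _ _ hmem
  · rw [if_neg hk1]
    by_cases hk2 : (k:ℕ) ≤ (j:ℕ)
    · rw [if_pos hk2]
      refine projC_eq (Submodule.smul_mem _ _ (wvec_orth hn hij hj hS)) ?_
      have hcast : (((j:ℕ) - (i:ℕ) : ℕ) : ℝ) = ((j:ℕ):ℝ) - ((i:ℕ):ℝ) := by
        push_cast [Nat.cast_sub hij'.le]
        ring
      have hmem : (((j:ℕ):ℝ)-((i:ℕ):ℝ)) • (e k) - wvec n (i:ℕ) (j:ℕ) ∈ Submodule.span ℝ S := by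
        have hdist : (((j:ℕ):ℝ)-((i:ℕ):ℝ)) • (e k) - wvec n (i:ℕ) (j:ℕ)
            = ∑ l ∈ Finset.univ.filter
                (fun l : Fin n => (i:ℕ) < (l:ℕ) ∧ (l:ℕ) ≤ (j:ℕ)), (e k - e l) := by
          rw [Finset.sum_sub_distrib, Finset.sum_const, wvec_card i.isLt j.isLt,
            wvec_sum n (i:ℕ) (j:ℕ)]
          congr 1
          rw [← Nat.cast_smul_eq_nsmul ℝ, hcast]
        rw [hdist]
        refine Submodule.sum_mem _ (fun l hl => ?_)
        have hl' := (Finset.mem_filter.1 hl).2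
        exact mem_block' hn hij hj hS k l (Or.inr ⟨by omega, hk2, hl'.1, hl'.2⟩)
      have heq : e k - (((j:ℕ):ℝ)-((i:ℕ):ℝ))⁻¹ • wvec n (i:ℕ) (j:ℕ)
          = (((j:ℕ):ℝ)-((i:ℕ):ℝ))⁻¹ •
            ((((j:ℕ):ℝ)-((i:ℕ):ℝ)) • (e k) - wvec n (i:ℕ) (j:ℕ)) := by
        rw [smul_sub, smul_smul,
          inv_mul_cancel₀ (sub_ne_zero.2 (by exact_mod_cast hij'.ne' : ((j:ℕ):ℝ) ≠ ((i:ℕ):ℝ))),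
          one_smul]
      rw [heq]
      exact Submodule.smul_mem _ _ hmem
    · rw [if_neg hk2]
      refine projC_eq (Submodule.zero_mem _) ?_
      rw [sub_zero]
      exact mem_tail hn hij hj hS k (by omega)

lemma projC_smul (c : ℝ) (x : EuclideanSpace ℝ (Fin n)) : projC S (c • x) = c • projC S x := by
  simp [projC, map_smul]

lemma Avec_apply (I : ℕ) (m : Fin n) :
    Avec n I m = if (m:ℕ) ≤ I then ((I:ℝ)+1)⁻¹ else 0 := by
  simp only [Avec, uvec, PiLp.toLp_apply, PiLp.smul_apply, smul_eq_mul, mul_ite, mul_one, mul_zero]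

lemma Bvec_apply (I J : ℕ) (m : Fin n) :
    Bvec n I J m = if I < (m:ℕ) ∧ (m:ℕ) ≤ J then ((J:ℝ)-(I:ℝ))⁻¹ else 0 := by
  simp only [Bvec, wvec, PiLp.toLp_apply, PiLp.smul_apply, smul_eq_mul, mul_ite, mul_one, mul_zero]

include hn hij hj in
lemma lincomb_inj {c d c' d' : ℝ}
    (h : c • Avec n (i:ℕ) + d • Bvec n (i:ℕ) (j:ℕ) = c' • Avec n (i:ℕ) + d' • Bvec n (i:ℕ) (j:ℕ)) :
    c = c' ∧ d = d' := by
  have hij' : (i:ℕ) < (j:ℕ) := hij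
  have ha : (((i:ℕ):ℝ)+1) ≠ 0 := by positivity
  have hb : (((j:ℕ):ℝ)-((i:ℕ):ℝ)) ≠ 0 :=
    sub_ne_zero.2 (by exact_mod_cast hij'.ne' : ((j:ℕ):ℝ) ≠ ((i:ℕ):ℝ))
  have h0 : (c • Avec n (i:ℕ) + d • Bvec n (i:ℕ) (j:ℕ)) ⟨0, by omega⟩
      = (c' • Avec n (i:ℕ) + d' • Bvec n (i:ℕ) (j:ℕ)) ⟨0, by omega⟩ := by rw [h]
  have h1 : (c • Avec n (i:ℕ) + d • Bvec n (i:ℕ) (j:ℕ)) ⟨(i:ℕ)+1, by omega⟩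
      = (c' • Avec n (i:ℕ) + d' • Bvec n (i:ℕ) (j:ℕ)) ⟨(i:ℕ)+1, by omega⟩ := by rw [h]
  simp only [PiLp.add_apply, PiLp.smul_apply, smul_eq_mul, Avec_apply, Bvec_apply,
    Fin.val_mk] at h0 h1
  rw [if_pos (by omega), if_neg (by omega)] at h0
  rw [if_neg (by omega), if_pos (by omega)] at h1
  constructor
  · have := mul_right_cancel₀ (inv_ne_zero ha) (by linarith : c * (((i:ℕ):ℝ)+1)⁻¹ = c' * (((i:ℕ):ℝ)+1)⁻¹)
    exact this
  · have := mul_right_cancel₀ (inv_ne_zero hb) (by linarith : d * (((j:ℕ):ℝ)-((i:ℕ):ℝ))⁻¹ = d' * (((j:ℕ):ℝ)-((i:ℕ):ℝ))⁻¹)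
    exact this

include hn hij hj in
lemma lincomb_ne {c d : ℝ} (h : c ≠ 0 ∨ d ≠ 0) :
    c • Avec n (i:ℕ) + d • Bvec n (i:ℕ) (j:ℕ) ≠ 0 := by
  intro h0
  have h0' : c • Avec n (i:ℕ) + d • Bvec n (i:ℕ) (j:ℕ)
      = (0:ℝ) • Avec n (i:ℕ) + (0:ℝ) • Bvec n (i:ℕ) (j:ℕ) := by rw [h0]; module
  obtain ⟨hc, hd⟩ := lincomb_inj hn hij hj h0'
  tauto

include hn hij hj hS in
lemma pi3 (k : Fin n) :
    projC S (e k) = Avec n (i:ℕ) ∨ projC S (e k) = Bvec n (i:ℕ) (j:ℕ) ∨ projC S (e k) = 0 := by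
  rw [proj_e hn hij hj hS k]
  split_ifs
  · exact Or.inl rfl
  · exact Or.inr (Or.inl rfl)
  · exact Or.inr (Or.inr rfl)

include hn hij hj hS in
lemma restricted_char {x : EuclideanSpace ℝ (Fin n)}
    (hx : x ∈ restrictedRoots (Droots n) S) :
    x ≠ 0 ∧ ∃ c d : ℝ, OKpair c d ∧ x = c • Avec n (i:ℕ) + d • Bvec n (i:ℕ) (j:ℕ) := by
  obtain ⟨⟨β, hβ, rfl⟩, h0⟩ := hx
  refine ⟨h0, ?_⟩
  obtain ⟨k, l, hkl, hcases⟩ := hβ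
  have hPk := pi3 hn hij hj hS k
  have hPl := pi3 hn hij hj hS l
  rcases hcases with rfl | rfl | rfl | rfl
  · have : projC S (e k - e l) = (1:ℝ) • projC S (e k) + (-1:ℝ) • projC S (e l) := by
      rw [projC_sub]; module
    rw [this]
    obtain ⟨c, d, hOK, heq⟩ := OKsum 1 (-1) (Or.inl rfl) (Or.inr rfl) _ _ hPk hPl
    exact ⟨c, d, hOK, heq⟩
  · have : projC S (e k + e l) = (1:ℝ) • projC S (e k) + (1:ℝ) • projC S (e l) := by
      rw [projC_add]; module
    rw [this]
    obtain ⟨c, d, hOK, heq⟩ := OKsum 1 1 (Or.inl rfl) (Or.inl rfl) _ _ hPk hPl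
    exact ⟨c, d, hOK, heq⟩
  · have : projC S (-e k + e l) = (-1:ℝ) • projC S (e k) + (1:ℝ) • projC S (e l) := by
      rw [projC_add, projC_neg]; module
    rw [this]
    obtain ⟨c, d, hOK, heq⟩ := OKsum (-1) 1 (Or.inr rfl) (Or.inl rfl) _ _ hPk hPl
    exact ⟨c, d, hOK, heq⟩
  · have : projC S (-e k - e l) = (-1:ℝ) • projC S (e k) + (-1:ℝ) • projC S (e l) := by
      rw [projC_sub, projC_neg]; module
    rw [this]
    obtain ⟨c, d, hOK, heq⟩ := OKsum (-1) (-1) (Or.inr rfl) (Or.inr rfl) _ _ hPk hPl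
    exact ⟨c, d, hOK, heq⟩

include hn hij hj hS in
lemma proj_c0 : projC S (e (⟨0, by omega⟩ : Fin n)) = Avec n (i:ℕ) := by
  have hij' : (i:ℕ) < (j:ℕ) := hij
  rw [proj_e hn hij hj hS]
  simp only [Fin.val_mk]
  rw [if_pos (by omega)]
  rfl

include hn hij hj hS in
lemma proj_c1 : projC S (e (⟨(i:ℕ)+1, by omega⟩ : Fin n)) = Bvec n (i:ℕ) (j:ℕ) := by
  have hij' : (i:ℕ) < (j:ℕ) := hij
  rw [proj_e hn hij hj hS]
  simp only [Fin.val_mk]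
  rw [if_neg (by omega), if_pos (by omega)]
  rfl

include hn hij hj hS in
lemma proj_cJ : projC S (e (⟨(j:ℕ)+1, by omega⟩ : Fin n)) = 0 := by
  have hij' : (i:ℕ) < (j:ℕ) := hij
  rw [proj_e hn hij hj hS]
  simp only [Fin.val_mk]
  rw [if_neg (by omega), if_neg (by omega)]

include hn hij hj hS in
lemma proj_alpha_i : projC S (Dsimple n (by omega) i) = Avec n (i:ℕ) - Bvec n (i:ℕ) (j:ℕ) := by
  have hij' : (i:ℕ) < (j:ℕ) := hij
  have hi1 : (i:ℕ)+1 < n := by omega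
  rw [Dsimple, dif_pos hi1, projC_sub, proj_e hn hij hj hS, proj_e hn hij hj hS]
  simp only [Fin.val_mk]
  rw [if_pos (by omega), if_neg (by omega), if_pos (by omega)]
  rfl

include hn hij hj hS in
lemma proj_alpha_j : projC S (Dsimple n (by omega) j) = Bvec n (i:ℕ) (j:ℕ) := by
  have hij' : (i:ℕ) < (j:ℕ) := hij
  have hj1 : (j:ℕ)+1 < n := by omega
  rw [Dsimple, dif_pos hj1, projC_sub, proj_e hn hij hj hS, proj_e hn hij hj hS]
  simp only [Fin.val_mk]
  rw [if_neg (by omega), if_pos (by omega), if_neg (by omega), if_neg (by omega), sub_zero]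
  rfl

include hn hij hj hS in
lemma mem_restr_lin (c d : ℝ)
    (h : (c=1∧d=-1) ∨ (c=1∧d=1) ∨ (c=1∧d=0) ∨ (c=0∧d=1) ∨ (c=-1∧d=1) ∨ (c=-1∧d=-1) ∨
      (c=-1∧d=0) ∨ (c=0∧d=-1)) :
    c • Avec n (i:ℕ) + d • Bvec n (i:ℕ) (j:ℕ) ∈ restrictedRoots (Droots n) S := by
  have hij' : (i:ℕ) < (j:ℕ) := hij
  set c0 : Fin n := ⟨0, by omega⟩ with hc0
  set c1 : Fin n := ⟨(i:ℕ)+1, by omega⟩ with hc1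
  set cJ : Fin n := ⟨(j:ℕ)+1, by omega⟩ with hcJ
  have h01 : c0 < c1 := by rw [hc0, hc1, Fin.mk_lt_mk]; omega
  have h0J : c0 < cJ := by rw [hc0, hcJ, Fin.mk_lt_mk]; omega
  have h1J : c1 < cJ := by rw [hc1, hcJ, Fin.mk_lt_mk]; omega
  have hP0 := proj_c0 hn hij hj hS
  have hP1 := proj_c1 hn hij hj hS
  have hPJ := proj_cJ hn hij hj hS
  have hnz : c • Avec n (i:ℕ) + d • Bvec n (i:ℕ) (j:ℕ) ≠ 0 := by
    refine lincomb_ne hn hij hj ?_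
    rcases h with ⟨h1,h2⟩|⟨h1,h2⟩|⟨h1,h2⟩|⟨h1,h2⟩|⟨h1,h2⟩|⟨h1,h2⟩|⟨h1,h2⟩|⟨h1,h2⟩ <;>
      rw [h1, h2] <;> norm_num
  rcases h with ⟨rfl,rfl⟩|⟨rfl,rfl⟩|⟨rfl,rfl⟩|⟨rfl,rfl⟩|⟨rfl,rfl⟩|⟨rfl,rfl⟩|⟨rfl,rfl⟩|⟨rfl,rfl⟩
  · exact ⟨⟨e c0 - e c1, ⟨c0, c1, h01, Or.inl rfl⟩,
      by rw [projC_sub, hP0, hP1]; module⟩, hnz⟩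
  · exact ⟨⟨e c0 + e c1, ⟨c0, c1, h01, Or.inr (Or.inl rfl)⟩,
      by rw [projC_add, hP0, hP1]; module⟩, hnz⟩
  · exact ⟨⟨e c0 - e cJ, ⟨c0, cJ, h0J, Or.inl rfl⟩,
      by rw [projC_sub, hP0, hPJ]; module⟩, hnz⟩
  · exact ⟨⟨e c1 - e cJ, ⟨c1, cJ, h1J, Or.inl rfl⟩,
      by rw [projC_sub, hP1, hPJ]; module⟩, hnz⟩
  · exact ⟨⟨-e c0 + e c1, ⟨c0, c1, h01, Or.inr (Or.inr (Or.inl rfl))⟩,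
      by rw [projC_add, projC_neg, hP0, hP1]; module⟩, hnz⟩
  · exact ⟨⟨-e c0 - e c1, ⟨c0, c1, h01, Or.inr (Or.inr (Or.inr rfl))⟩,
      by rw [projC_sub, projC_neg, hP0, hP1]; module⟩, hnz⟩
  · exact ⟨⟨-e c0 + e cJ, ⟨c0, cJ, h0J, Or.inr (Or.inr (Or.inl rfl))⟩,
      by rw [projC_add, projC_neg, hP0, hPJ]; module⟩, hnz⟩
  · exact ⟨⟨-e c1 + e cJ, ⟨c1, cJ, h1J, Or.inr (Or.inr (Or.inl rfl))⟩,
      by rw [projC_add, projC_neg, hP1, hPJ]; module⟩, hnz⟩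

include hn hij hj hS in
lemma half_not_mem (p q : ℝ) (hp : p = 1 ∨ p = -1 ∨ p = 0) (hq : q = 1 ∨ q = -1 ∨ q = 0)
    (hpq : p ≠ 0 ∨ q ≠ 0) :
    ¬ ((1/2 : ℝ) • (p • Avec n (i:ℕ) + q • Bvec n (i:ℕ) (j:ℕ)) ∈ restrictedRoots (Droots n) S) := by
  intro hmem
  obtain ⟨-, c, d, hOK, heq⟩ := restricted_char hn hij hj hS hmem
  have h2 : (p/2) • Avec n (i:ℕ) + (q/2) • Bvec n (i:ℕ) (j:ℕ) = c • Avec n (i:ℕ) + d • Bvec n (i:ℕ) (j:ℕ) := by rw [← heq]; module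
  obtain ⟨hc, hd⟩ := lincomb_inj hn hij hj h2
  rw [← hc, ← hd] at hOK
  rcases hp with rfl|rfl|rfl <;> rcases hq with rfl|rfl|rfl <;>
    first
      | exact hpq.elim (fun h => h rfl) (fun h => h rfl)
      | norm_num [OKpair] at hOK

end Aux

/-- In type `D_n` (`n ≥ 4`), removing the simple roots `α_i, α_j`
(`1 ≤ i < j ≤ n−2`), the projections `ᾱ_i, ᾱ_j` onto the orthogonal complement of the
span of the remaining simple roots are linearly independent, and the set of reduced
restricted roots is `{±ᾱ_i, ±ᾱ_j, ±(ᾱ_i + ᾱ_j), ±(ᾱ_i + 2ᾱ_j)}` (type `B_2`). -/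
theorem statement10 (n : ℕ) (hn : 4 ≤ n) (i j : Fin n) (hij : i < j)
    (hj : (j : ℕ) + 2 < n)
    (S : Set (EuclideanSpace ℝ (Fin n)))
    (hS : S = {v | ∃ k : Fin n, k ≠ i ∧ k ≠ j ∧ v = Dsimple n (by omega) k}) :
    LinearIndependent ℝ
      ![projC S (Dsimple n (by omega) i), projC S (Dsimple n (by omega) j)] ∧
    reducedRestrictedRoots (Droots n) S =
      {projC S (Dsimple n (by omega) i), -projC S (Dsimple n (by omega) i),
       projC S (Dsimple n (by omega) j), -projC S (Dsimple n (by omega) j),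
       projC S (Dsimple n (by omega) i) + projC S (Dsimple n (by omega) j),
       -(projC S (Dsimple n (by omega) i) + projC S (Dsimple n (by omega) j)),
       projC S (Dsimple n (by omega) i) + (2 : ℝ) • projC S (Dsimple n (by omega) j),
       -(projC S (Dsimple n (by omega) i) + (2 : ℝ) • projC S (Dsimple n (by omega) j))} := by
  have hai := proj_alpha_i hn hij hj hS
  have haj := proj_alpha_j hn hij hj hS
  rw [hai, haj]
  constructor
  · rw [LinearIndependent.pair_iff]
    intro s t hst
    have h2 : s • Avec n (i:ℕ) + (t - s) • Bvec n (i:ℕ) (j:ℕ) = (0:ℝ) • Avec n (i:ℕ) + (0:ℝ) • Bvec n (i:ℕ) (j:ℕ) := by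
      calc s • Avec n (i:ℕ) + (t - s) • Bvec n (i:ℕ) (j:ℕ)
          = s • (Avec n (i:ℕ) - Bvec n (i:ℕ) (j:ℕ)) + t • Bvec n (i:ℕ) (j:ℕ) := by module
        _ = 0 := hst
        _ = (0:ℝ) • Avec n (i:ℕ) + (0:ℝ) • Bvec n (i:ℕ) (j:ℕ) := by module
    obtain ⟨hs, ht⟩ := lincomb_inj hn hij hj h2
    exact ⟨hs, by linarith⟩
  · ext x
    simp only [reducedRestrictedRoots, Set.mem_setOf_eq, Set.mem_insert_iff,
      Set.mem_singleton_iff]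
    constructor
    · rintro ⟨hmem, hhalf⟩
      obtain ⟨hne, c, d, hOK, rfl⟩ := restricted_char hn hij hj hS hmem
      rcases hOK with ⟨rfl,rfl⟩|⟨rfl,rfl⟩|⟨rfl,rfl⟩|⟨rfl,rfl⟩|⟨rfl,rfl⟩|⟨rfl,rfl⟩|⟨rfl,rfl⟩|
        ⟨rfl,rfl⟩|⟨rfl,rfl⟩|⟨rfl,rfl⟩|⟨rfl,rfl⟩|⟨rfl,rfl⟩|⟨rfl,rfl⟩
      · exact absurd (show (0:ℝ) • Avec n (i:ℕ) + (0:ℝ) • Bvec n (i:ℕ) (j:ℕ) = 0 by module) hne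
      · -- (1,0) : Avec = (A-B) + B
        refine Or.inr (Or.inr (Or.inr (Or.inr (Or.inl ?_)))); module
      · refine Or.inr (Or.inr (Or.inr (Or.inr (Or.inr (Or.inl ?_))))); module
      · -- (2,0) : not reduced
        exfalso
        refine hhalf ?_
        rw [show (1/2:ℝ) • ((2:ℝ) • Avec n (i:ℕ) + (0:ℝ) • Bvec n (i:ℕ) (j:ℕ)) = (1:ℝ) • Avec n (i:ℕ) + (0:ℝ) • Bvec n (i:ℕ) (j:ℕ) by module]
        exact mem_restr_lin hn hij hj hS 1 0 (by norm_num)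
      · exfalso
        refine hhalf ?_
        rw [show (1/2:ℝ) • ((-2:ℝ) • Avec n (i:ℕ) + (0:ℝ) • Bvec n (i:ℕ) (j:ℕ)) = (-1:ℝ) • Avec n (i:ℕ) + (0:ℝ) • Bvec n (i:ℕ) (j:ℕ) by module]
        exact mem_restr_lin hn hij hj hS (-1) 0 (by norm_num)
      · -- (0,1) : B
        refine Or.inr (Or.inr (Or.inl ?_)); module
      · refine Or.inr (Or.inr (Or.inr (Or.inl ?_))); module
      · exfalso
        refine hhalf ?_
        rw [show (1/2:ℝ) • ((0:ℝ) • Avec n (i:ℕ) + (2:ℝ) • Bvec n (i:ℕ) (j:ℕ)) = (0:ℝ) • Avec n (i:ℕ) + (1:ℝ) • Bvec n (i:ℕ) (j:ℕ) by module]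
        exact mem_restr_lin hn hij hj hS 0 1 (by norm_num)
      · exfalso
        refine hhalf ?_
        rw [show (1/2:ℝ) • ((0:ℝ) • Avec n (i:ℕ) + (-2:ℝ) • Bvec n (i:ℕ) (j:ℕ)) = (0:ℝ) • Avec n (i:ℕ) + (-1:ℝ) • Bvec n (i:ℕ) (j:ℕ) by module]
        exact mem_restr_lin hn hij hj hS 0 (-1) (by norm_num)
      · -- (1,1) : A + B = (A-B) + 2B
        refine Or.inr (Or.inr (Or.inr (Or.inr (Or.inr (Or.inr (Or.inl ?_)))))); module
      · -- (1,-1) : A - B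
        exact Or.inl (by module)
      · -- (-1,1)
        refine Or.inr (Or.inl ?_); module
      · -- (-1,-1) : -(A+B)
        refine Or.inr (Or.inr (Or.inr (Or.inr (Or.inr (Or.inr (Or.inr ?_)))))); module
    · intro hx
      have hmk : ∀ c d : ℝ,
          (c=1∧d=-1) ∨ (c=1∧d=1) ∨ (c=1∧d=0) ∨ (c=0∧d=1) ∨ (c=-1∧d=1) ∨ (c=-1∧d=-1) ∨
            (c=-1∧d=0) ∨ (c=0∧d=-1) →
          (c • Avec n (i:ℕ) + d • Bvec n (i:ℕ) (j:ℕ) ∈ restrictedRoots (Droots n) S ∧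
            ¬ (1/2:ℝ) • (c • Avec n (i:ℕ) + d • Bvec n (i:ℕ) (j:ℕ)) ∈ restrictedRoots (Droots n) S) := by
        intro c d h
        refine ⟨mem_restr_lin hn hij hj hS c d h, half_not_mem hn hij hj hS c d ?_ ?_ ?_⟩ <;>
          rcases h with ⟨h1,h2⟩|⟨h1,h2⟩|⟨h1,h2⟩|⟨h1,h2⟩|⟨h1,h2⟩|⟨h1,h2⟩|⟨h1,h2⟩|⟨h1,h2⟩ <;>
          norm_num [h1, h2]
      rcases hx with rfl|rfl|rfl|rfl|rfl|rfl|rfl|rfl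
      · rw [show Avec n (i:ℕ) - Bvec n (i:ℕ) (j:ℕ) = (1:ℝ) • Avec n (i:ℕ) + (-1:ℝ) • Bvec n (i:ℕ) (j:ℕ) by module]
        exact hmk 1 (-1) (by norm_num)
      · rw [show -(Avec n (i:ℕ) - Bvec n (i:ℕ) (j:ℕ)) = (-1:ℝ) • Avec n (i:ℕ) + (1:ℝ) • Bvec n (i:ℕ) (j:ℕ) by module]
        exact hmk (-1) 1 (by norm_num)
      · rw [show Bvec n (i:ℕ) (j:ℕ) = (0:ℝ) • Avec n (i:ℕ) + (1:ℝ) • Bvec n (i:ℕ) (j:ℕ) by module]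
        exact hmk 0 1 (by norm_num)
      · rw [show -Bvec n (i:ℕ) (j:ℕ) = (0:ℝ) • Avec n (i:ℕ) + (-1:ℝ) • Bvec n (i:ℕ) (j:ℕ) by module]
        exact hmk 0 (-1) (by norm_num)
      · rw [show Avec n (i:ℕ) - Bvec n (i:ℕ) (j:ℕ) + Bvec n (i:ℕ) (j:ℕ) = (1:ℝ) • Avec n (i:ℕ) + (0:ℝ) • Bvec n (i:ℕ) (j:ℕ) by module]
        exact hmk 1 0 (by norm_num)
      · rw [show -(Avec n (i:ℕ) - Bvec n (i:ℕ) (j:ℕ) + Bvec n (i:ℕ) (j:ℕ)) = (-1:ℝ) • Avec n (i:ℕ) + (0:ℝ) • Bvec n (i:ℕ) (j:ℕ) by module]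
        exact hmk (-1) 0 (by norm_num)
      · rw [show Avec n (i:ℕ) - Bvec n (i:ℕ) (j:ℕ) + (2:ℝ) • Bvec n (i:ℕ) (j:ℕ) = (1:ℝ) • Avec n (i:ℕ) + (1:ℝ) • Bvec n (i:ℕ) (j:ℕ) by module]
        exact hmk 1 1 (by norm_num)
      · rw [show -(Avec n (i:ℕ) - Bvec n (i:ℕ) (j:ℕ) + (2:ℝ) • Bvec n (i:ℕ) (j:ℕ)) = (-1:ℝ) • Avec n (i:ℕ) + (-1:ℝ) • Bvec n (i:ℕ) (j:ℕ) by module]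
        exact hmk (-1) (-1) (by norm_num)

end
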